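/- Let A be an associative algebra over a field of characteristic zero and let M₃ be the two-sided ideal generated by triple commutators [a,[b,c]]. Then the symmetrized product a⋆b := (ab+ba)/2 descends to an associative and commutative product on A/M₃. -/
import Mathlib


open Submodule

variable (K : Type*) (A : Type*)

/-- Lower central series Lie ideals: L₁ = A, Lₖ = [A, Lₖ₋₁]. -/
def lcs [CommRing K] [Ring A] [Algebra K A] : ℕ → Submodule K A
  | 0 => ⊤
  | 1 => ⊤
  | (k+2) => Submodule.span K {x : A | ∃ a : A, ∃ l ∈ lcs (k+1), x = a * l - l * a}

/-- Lower central series two-sided ideals Mₖ = A·Lₖ·A. -/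
def lcsM [CommRing K] [Ring A] [Algebra K A] (k : ℕ) : Submodule K A :=
  Submodule.span K {x : A | ∃ p q : A, ∃ l ∈ lcs K A k, x = p * l * q}

/-- The symmetrized (star) product `a⋆b = (ab+ba)/2`. -/
def starP (K : Type*) {A : Type*} [Field K] [Ring A] [Algebra K A] (a b : A) : A :=
  (1/2 : K) • (a * b + b * a)

lemma lcsM_mul_left {K A : Type*} [CommRing K] [Ring A] [Algebra K A] {k : ℕ}
    {x : A} (hx : x ∈ lcsM K A k) (r : A) : r * x ∈ lcsM K A k := by
  induction hx using Submodule.span_induction with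
  | mem y hy =>
    obtain ⟨p, q, l, hl, rfl⟩ := hy
    exact Submodule.subset_span ⟨r * p, q, l, hl, by noncomm_ring⟩
  | zero => simp
  | add y z _ _ hy hz => rw [mul_add]; exact add_mem hy hz
  | smul c y _ hy => rw [mul_smul_comm]; exact Submodule.smul_mem _ _ hy

lemma lcsM_mul_right {K A : Type*} [CommRing K] [Ring A] [Algebra K A] {k : ℕ}
    {x : A} (hx : x ∈ lcsM K A k) (r : A) : x * r ∈ lcsM K A k := by
  induction hx using Submodule.span_induction with
  | mem y hy =>
    obtain ⟨p, q, l, hl, rfl⟩ := hy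
    exact Submodule.subset_span ⟨p, q * r, l, hl, by noncomm_ring⟩
  | zero => simp
  | add y z _ _ hy hz => rw [add_mul]; exact add_mem hy hz
  | smul c y _ hy => rw [smul_mul_assoc]; exact Submodule.smul_mem _ _ hy

lemma comm3_mem {K A : Type*} [CommRing K] [Ring A] [Algebra K A] (a b c : A) :
    b * (a * c - c * a) - (a * c - c * a) * b ∈ lcsM K A 3 := by
  have hl : a * c - c * a ∈ lcs K A 2 :=
    Submodule.subset_span ⟨a, c, Submodule.mem_top, rfl⟩
  have hl3 : b * (a * c - c * a) - (a * c - c * a) * b ∈ lcs K A 3 :=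
    Submodule.subset_span ⟨b, a * c - c * a, hl, rfl⟩
  exact Submodule.subset_span ⟨1, 1, _, hl3, by simp⟩

/-- the star product descends to a well-defined, associative and commutative
product on `A/M₃`. -/
theorem stmt6 {K A : Type*} [Field K] [CharZero K] [Ring A] [Algebra K A] :
    (∀ a a' b b' : A, a - a' ∈ lcsM K A 3 → b - b' ∈ lcsM K A 3 →
        starP K a b - starP K a' b' ∈ lcsM K A 3)
    ∧ (∀ a b c : A, starP K (starP K a b) c - starP K a (starP K b c) ∈ lcsM K A 3)
    ∧ (∀ a b : A, starP K a b = starP K b a) := by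
  refine ⟨?_, ?_, ?_⟩
  · intro a a' b b' ha hb
    have h : starP K a b - starP K a' b' =
        (1/2 : K) • ((a - a') * b + b * (a - a') + (a' * (b - b') + (b - b') * a')) := by
      simp only [starP, ← smul_sub]
      congr 1
      noncomm_ring
    rw [h]
    exact Submodule.smul_mem _ _ (add_mem
      (add_mem (lcsM_mul_right ha b) (lcsM_mul_left ha b))
      (add_mem (lcsM_mul_left hb a') (lcsM_mul_right hb a')))
  · intro a b c
    have h : starP K (starP K a b) c - starP K a (starP K b c) =
        (1/2 : K) • ((1/2 : K) • (b * (a * c - c * a) - (a * c - c * a) * b)) := by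
      simp only [starP, smul_mul_assoc, mul_smul_comm, ← smul_add, ← smul_sub]
      congr 2
      noncomm_ring
    rw [h]
    exact Submodule.smul_mem _ _ (Submodule.smul_mem _ _ (comm3_mem a b c))
  · intro a b
    simp [starP, add_comm]
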